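/- Suppose r ∈ L ⊗ L satisfies a·r ∈ Im(1⊗1 − τ) for all a ∈ L, where τ is the twist map and L acts diagonally by the adjoint action. Then r ∈ Im(1⊗1 − τ), i.e., r is antisymmetric. -/

import Mathlib

open Finsupp TensorProduct

/-- Bracket of the generalized loop Witt algebra `[L_{α,i},L_{β,j}] = (β−α)L_{α+β,i+j}`. -/
noncomputable def bk2 {F : Type*} [Field F] (Γ : AddSubgroup F) :
    ((Γ × ℤ) →₀ F) →ₗ[F] ((Γ × ℤ) →₀ F) →ₗ[F] ((Γ × ℤ) →₀ F) :=
  Finsupp.lsum F fun p => LinearMap.toSpanSingleton F _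
    (Finsupp.lsum F fun q =>
      (((q.1 : F) - (p.1 : F)) • Finsupp.lsingle (p.1 + q.1, p.2 + q.2) : F →ₗ[F] _))

/-- Diagonal adjoint action of `L` on `L ⊗ L`. -/
noncomputable def act {F : Type*} [Field F] (Γ : AddSubgroup F) (x : (Γ × ℤ) →₀ F) :
    (((Γ × ℤ) →₀ F) ⊗[F] ((Γ × ℤ) →₀ F)) →ₗ[F] (((Γ × ℤ) →₀ F) ⊗[F] ((Γ × ℤ) →₀ F)) :=
  LinearMap.rTensor _ (bk2 Γ x) + LinearMap.lTensor _ (bk2 Γ x)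

/-- The twist map `τ(u ⊗ v) = v ⊗ u`. -/
noncomputable def tw {F : Type*} [Field F] (Γ : AddSubgroup F) :
    (((Γ × ℤ) →₀ F) ⊗[F] ((Γ × ℤ) →₀ F)) →ₗ[F] (((Γ × ℤ) →₀ F) ⊗[F] ((Γ × ℤ) →₀ F)) :=
  (TensorProduct.comm F _ _).toLinearMap

/-- The image of the antisymmetrization map `Im(1⊗1 − τ)`, as a set. -/
noncomputable def antiSym {F : Type*} [Field F] (Γ : AddSubgroup F) :
    Set (((Γ × ℤ) →₀ F) ⊗[F] ((Γ × ℤ) →₀ F)) :=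
  Set.range fun u => u - tw Γ u

lemma bk2_single {F : Type*} [Field F] (Γ : AddSubgroup F) (p q : Γ × ℤ) :
    bk2 Γ (single p (1:F)) (single q 1) = single (p+q) ((q.1:F) - p.1) := by
  have : bk2 Γ (single p (1:F)) (single q 1) = ((q.1:F) - p.1) • single (p+q) 1 := by
    simp [bk2]; rfl
  rw [this, Finsupp.smul_single, smul_eq_mul, mul_one]

lemma key {F : Type*} [Field F] (Γ : AddSubgroup F) (p u v : Γ × ℤ)
    (s : ((Γ × ℤ) →₀ F) ⊗[F] ((Γ × ℤ) →₀ F)) :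
    (finsuppTensorFinsupp' F _ _ (act Γ (single p 1) s)) (u, v)
      = ((u.1:F) - 2*p.1) * (finsuppTensorFinsupp' F _ _ s) (u-p, v)
        + ((v.1:F) - 2*p.1) * (finsuppTensorFinsupp' F _ _ s) (u, v-p) := by
  set φ := (finsuppTensorFinsupp' F (Γ × ℤ) (Γ × ℤ))
  have : (Finsupp.lapply (u,v) ∘ₗ φ.toLinearMap ∘ₗ act Γ (single p 1) :
        (((Γ × ℤ) →₀ F) ⊗[F] ((Γ × ℤ) →₀ F)) →ₗ[F] F)
      = ((u.1:F) - 2*p.1) • (Finsupp.lapply (u-p,v) ∘ₗ φ.toLinearMap)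
        + ((v.1:F) - 2*p.1) • (Finsupp.lapply (u,v-p) ∘ₗ φ.toLinearMap) := by
    ext q q'
    simp only [AlgebraTensorModule.curry_apply, TensorProduct.curry_apply,
      LinearMap.coe_restrictScalars, Finsupp.lsingle_apply,
      LinearMap.coe_comp, Function.comp_apply, LinearMap.add_apply,
      LinearMap.smul_apply, LinearEquiv.coe_coe, Finsupp.lapply_apply,
      act, LinearMap.rTensor_tmul,
      LinearMap.lTensor_tmul, bk2_single, smul_eq_mul]
    rw [φ.map_add, Finsupp.add_apply]
    simp only [φ, finsuppTensorFinsupp'_single_tmul_single, mul_one, one_mul]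
    have hiff1 : ((p + q, q') = (u, v)) ↔ ((q, q') = (u - p, v)) := by
      simp only [Prod.mk.injEq]
      constructor
      · rintro ⟨a, b⟩
        exact ⟨by rw [← a]; abel, b⟩
      · rintro ⟨a, b⟩
        exact ⟨by rw [a]; abel, b⟩
    have hiff2 : ((q, p + q') = (u, v)) ↔ ((q, q') = (u, v - p)) := by
      simp only [Prod.mk.injEq]
      constructor
      · rintro ⟨a, b⟩
        exact ⟨a, by rw [← b]; abel⟩
      · rintro ⟨a, b⟩
        exact ⟨a, by rw [b]; abel⟩
    classical
    rw [Finsupp.single_apply, Finsupp.single_apply, Finsupp.single_apply, Finsupp.single_apply]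
    simp only [hiff1, hiff2]
    split_ifs with h1 h2 h2
    · have hq : q = u - p := congrArg Prod.fst h1
      have hq2 : q = u := congrArg Prod.fst h2
      have hq' : q' = v := congrArg Prod.snd h1
      have hp : p = 0 := by
        have : u - p = u := by rw [← hq, hq2]
        exact sub_eq_self.mp this
      subst hq hq' hp
      push_cast [Prod.fst_sub, Prod.fst_zero]
      ring
    · have hq : q = u - p := congrArg Prod.fst h1
      subst hq
      push_cast [Prod.fst_sub]
      ring
    · have hq' : q' = v - p := congrArg Prod.snd h2
      subst hq'
      push_cast [Prod.fst_sub]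
      ring
    · ring
  have h := LinearMap.congr_fun this s
  simpa using h

lemma tw_tw {F : Type*} [Field F] (Γ : AddSubgroup F)
    (x : ((Γ × ℤ) →₀ F) ⊗[F] ((Γ × ℤ) →₀ F)) : tw Γ (tw Γ x) = x := by
  induction x using TensorProduct.induction_on with
  | zero => simp
  | tmul a b => simp [tw]
  | add x y hx hy => rw [map_add, map_add, hx, hy]

lemma tw_act {F : Type*} [Field F] (Γ : AddSubgroup F) (a : (Γ × ℤ) →₀ F)
    (x : ((Γ × ℤ) →₀ F) ⊗[F] ((Γ × ℤ) →₀ F)) :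
    tw Γ (act Γ a x) = act Γ a (tw Γ x) := by
  induction x using TensorProduct.induction_on with
  | zero => simp
  | tmul y z =>
      simp only [act, tw, LinearMap.add_apply, LinearMap.rTensor_tmul,
        LinearMap.lTensor_tmul, map_add, LinearEquiv.coe_coe,
        TensorProduct.comm_tmul]
      exact add_comm _ _
  | add x y hx hy =>
      rw [map_add, map_add, map_add, hx, hy, map_add]

noncomputable instance tensorZero {F : Type*} [Field F] (Γ : AddSubgroup F) :
    Zero (((Γ × ℤ) →₀ F) ⊗[F] ((Γ × ℤ) →₀ F)) :=
  (inferInstance : AddZeroClass (((Γ × ℤ) →₀ F) ⊗[F] ((Γ × ℤ) →₀ F))).toZero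

/-- if `a·r ∈ Im(1⊗1 − τ)` for all `a ∈ L`, then `r ∈ Im(1⊗1 − τ)`. -/
theorem invariantly_antisymmetric_is_antisymmetric
    {F : Type*} [Field F] [CharZero F] (Γ : AddSubgroup F) (h1 : (1 : F) ∈ Γ)
    (r : ((Γ × ℤ) →₀ F) ⊗[F] ((Γ × ℤ) →₀ F))
    (hr : ∀ a : (Γ × ℤ) →₀ F,
      act Γ a r ∈ antiSym Γ) :
    r ∈ antiSym Γ := by
  classical
  set φ := (finsuppTensorFinsupp' F (Γ × ℤ) (Γ × ℤ)) with hφ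
  set s := r + tw Γ r with hs
  have hact : ∀ a : (Γ × ℤ) →₀ F, act Γ a s = 0 := by
    intro a
    obtain ⟨w, hw⟩ := hr a
    have h2 : act Γ a (tw Γ r) = tw Γ (act Γ a r) := (tw_act Γ a r).symm
    rw [hs, map_add, h2, ← hw]
    simp only [map_sub, tw_tw]
    abel
  have hc : ∀ p u v : Γ × ℤ,
      ((u.1:F) - 2*(p.1:F)) * (φ s) (u-p, v) + ((v.1:F) - 2*(p.1:F)) * (φ s) (u, v-p) = 0 := by
    intro p u v
    rw [← key Γ p u v s, hact (single p 1), φ.map_zero]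
    rfl
  set c := φ s with hcdef
  -- Step E0
  have hE0 : ∀ u v : Γ × ℤ, ((u.1:F) + (v.1:F)) * c (u, v) = 0 := by
    intro u v
    have h := hc 0 u v
    simp only [Prod.fst_zero, ZeroMemClass.coe_zero, mul_zero, sub_zero] at h
    linear_combination h
  -- Step B : first coordinate nonzero forces zero
  have hB : ∀ u v : Γ × ℤ, (u.1:F) ≠ 0 → c (u, v) = 0 := by
    intro u v hu
    by_contra hne
    have hv : (v.1:F) = -(u.1:F) := by
      have h := hE0 u v
      rcases mul_eq_zero.mp h with h' | h'
      · linear_combination h'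
      · exact absurd h' hne
    have hshift : ∀ m : ℤ, c (u + ((0:Γ), m), v - ((0:Γ), m)) = c (u, v) := by
      intro m
      have h := hc ((0:Γ), m) (u + ((0:Γ), m)) v
      have e1 : (u + ((0:Γ), m)) - ((0:Γ), m) = u := add_sub_cancel_right u _
      have e2 : ((u + ((0:Γ), m)).1 : F) = (u.1 : F) := by
        simp [Prod.fst_add]
      rw [e1, e2] at h
      simp only [ZeroMemClass.coe_zero, mul_zero, sub_zero] at h
      rw [hv] at h
      have h' : (u.1:F) * c (u + ((0:Γ), m), v - ((0:Γ), m)) = (u.1:F) * c (u, v) := by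
        linear_combination -h
      exact mul_left_cancel₀ hu h'
    obtain ⟨n, hn⟩ := Infinite.exists_notMem_finset
      (c.support.image fun w : (Γ × ℤ) × (Γ × ℤ) => w.1.2)
    have h := hshift (n - u.2)
    have hmem : (u + ((0:Γ), n - u.2), v - ((0:Γ), n - u.2)) ∈ c.support := by
      rw [Finsupp.mem_support_iff, h]
      exact hne
    have : n ∈ c.support.image fun w : (Γ × ℤ) × (Γ × ℤ) => w.1.2 := by
      refine Finset.mem_image.mpr ⟨_, hmem, ?_⟩
      simp [Prod.snd_add]
    exact hn this
  -- Step D : all coefficients vanish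
  have hzero : ∀ u v : Γ × ℤ, c (u, v) = 0 := by
    intro u v
    by_cases hu : (u.1:F) = 0
    · set e : Γ × ℤ := ((⟨1, h1⟩ : Γ), (0:ℤ)) with he
      have h := hc e (u + e) v
      have e1 : (u + e) - e = u := add_sub_cancel_right u e
      have e2 : ((u + e).1 : F) = 1 := by
        simp [Prod.fst_add, he, hu]
      have e3 : (e.1 : F) = 1 := rfl
      have e4 : c (u + e, v - e) = 0 := by
        apply hB
        rw [e2]
        norm_num
      rw [e1, e2, e3, e4, mul_zero, add_zero] at h
      have : ((1:F) - 2*1) ≠ 0 := by norm_num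
      exact (mul_eq_zero.mp h).resolve_left this
    · exact hB u v hu
  have hczero : c = 0 := by
    ext w
    rw [Finsupp.zero_apply, ← hzero w.1 w.2]
  have hs0 : s = 0 := by
    have := hczero
    rw [hcdef] at this
    exact (LinearEquiv.map_eq_zero_iff φ).mp this
  have h0 : r + tw Γ r = 0 := by rw [← hs, hs0]
  refine ⟨(2:F)⁻¹ • r, ?_⟩
  show (2:F)⁻¹ • r - tw Γ ((2:F)⁻¹ • r) = r
  rw [map_smul]
  have h2 : tw Γ r = 0 - r := by rw [← h0]; abel
  rw [h2]
  module
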